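/- Let C be a nonempty closed proper subset of Euclidean space ℝ^n and let U ⊆ ℝ^n be a linear subspace not contained in C. Let x ∈ U with x ∉ C, and suppose the restriction to U of the function z ↦ dist(z, C) is differentiable at x (i.e., has a Fréchet derivative within U). Let y* ∈ C be a best approximation of x, i.e., ‖x − y*‖ = dist(x, C). Then the derivative is given by ∂d(x)(u) = ⟨u, x − y*⟩ / dist(x, C) for every u ∈ U; consequently, if z* ∈ C is another best approximation of x, then z* − y* belongs to the orthogonal complement U^⊥. -/

import Mathlib

/-- If the restriction to a subspace `U` of the distance function to a closed
set `C` is differentiable (within `U`) at `x ∈ U \ C`, then its derivative is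
`u ↦ ⟨u, x - y*⟩ / dist(x, C)` for any best approximation `y*` of `x`;
consequently any two best approximations of `x` differ by a vector in `Uᗮ`. -/
theorem deriv_dist_restricted_to_subspace
    (n : ℕ) (C : Set (EuclideanSpace ℝ (Fin n))) (hne : C.Nonempty)
    (hcl : IsClosed C) (hproper : C ≠ Set.univ)
    (U : Submodule ℝ (EuclideanSpace ℝ (Fin n))) (hU : ¬ (U : Set (EuclideanSpace ℝ (Fin n))) ⊆ C)
    (x : EuclideanSpace ℝ (Fin n)) (hxU : x ∈ U) (hxC : x ∉ C)
    (D : EuclideanSpace ℝ (Fin n) →L[ℝ] ℝ)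
    (hD : HasFDerivWithinAt (fun z => Metric.infDist z C) D (U : Set (EuclideanSpace ℝ (Fin n))) x)
    (ystar : EuclideanSpace ℝ (Fin n)) (hyC : ystar ∈ C)
    (hybest : dist x ystar = Metric.infDist x C) :
    (∀ u ∈ U, D u = (inner ℝ u (x - ystar) : ℝ) / Metric.infDist x C) ∧
      ∀ zstar ∈ C, dist x zstar = Metric.infDist x C → zstar - ystar ∈ Uᗮ := by
  have hdpos : 0 < Metric.infDist x C := (hcl.notMem_iff_infDist_pos hne).1 hxC
  -- Key claim for an arbitrary best approximation y.
  have key : ∀ y ∈ C, dist x y = Metric.infDist x C →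
      ∀ u ∈ U, D u = (inner ℝ u (x - y) : ℝ) / Metric.infDist x C := by
    intro y hyC hbest u huU
    set v : EuclideanSpace ℝ (Fin n) := x - y with hv
    have hvnorm : ‖v‖ = Metric.infDist x C := by
      rw [hv, ← dist_eq_norm, hbest]
    have hvpos : 0 < ‖v‖ := hvnorm ▸ hdpos
    -- the line t ↦ x + t • u
    set ℓ : ℝ → EuclideanSpace ℝ (Fin n) := fun t => x + t • u with hℓ
    have hℓderiv : HasDerivAt ℓ u 0 := by
      have : HasDerivAt (fun t : ℝ => t • u) ((1:ℝ) • u) 0 := (hasDerivAt_id 0).smul_const u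
      simpa [hℓ, one_smul] using this.const_add x
    have hℓmaps : ∀ t : ℝ, ℓ t ∈ (U : Set (EuclideanSpace ℝ (Fin n))) := fun t =>
      U.add_mem hxU (U.smul_mem t huU)
    -- first function: t ↦ infDist (ℓ t) C, derivative D u at 0
    have h1 : HasDerivAt (fun t => Metric.infDist (ℓ t) C) (D u) 0 := by
      have := hD.comp_hasDerivWithinAt_of_eq (s := Set.univ) 0
        (hℓderiv.hasDerivWithinAt) (fun t _ => hℓmaps t) (by simp [hℓ])
      rw [hasDerivWithinAt_univ] at this; exact this
    -- q t = ‖ℓ t - y‖ ^ 2, a quadratic in t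
    have hq : ∀ t : ℝ, ‖ℓ t - y‖ ^ 2
        = ‖v‖ ^ 2 + (2 * inner ℝ v u) * t + ‖u‖ ^ 2 * t ^ 2 := by
      intro t
      have : ℓ t - y = v + t • u := by rw [hℓ, hv]; show x + t • u - y = x - y + t • u; rw [sub_add_eq_add_sub]
      rw [this, norm_add_sq_real, real_inner_smul_right, norm_smul, mul_pow]
      simp [Real.norm_eq_abs, sq_abs]
      ring
    -- derivative of q at 0 is 2⟪v,u⟫
    have hqderiv : HasDerivAt (fun t : ℝ => ‖v‖ ^ 2 + (2 * inner ℝ v u) * t + ‖u‖ ^ 2 * t ^ 2)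
        (2 * inner ℝ v u) 0 := by
      have h1' : HasDerivAt (fun t : ℝ => (2 * inner ℝ v u : ℝ) * t) (2 * inner ℝ v u) 0 := by
        simpa using (hasDerivAt_id (0:ℝ)).const_mul (2 * inner ℝ v u : ℝ)
      have h2' : HasDerivAt (fun t : ℝ => ‖u‖ ^ 2 * t ^ 2) 0 0 := by
        have := ((hasDerivAt_pow 2 (0:ℝ))).const_mul (‖u‖ ^ 2)
        simpa using this
      have := ((h1'.const_add (‖v‖ ^ 2)).add h2'); simp only [add_zero] at this; exact this
    -- second function g t = ‖ℓ t - y‖ = sqrt (q t)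
    have h2 : HasDerivAt (fun t => ‖ℓ t - y‖) ((inner ℝ v u : ℝ) / ‖v‖) 0 := by
      have hzero : (‖v‖ ^ 2 + (2 * inner ℝ v u) * (0:ℝ) + ‖u‖ ^ 2 * (0:ℝ) ^ 2 : ℝ) = ‖v‖ ^ 2 := by
        ring
      have hne0 : (fun t : ℝ => ‖v‖ ^ 2 + (2 * inner ℝ v u) * t + ‖u‖ ^ 2 * t ^ 2) 0 ≠ 0 := by
        show (‖v‖ ^ 2 + (2 * inner ℝ v u) * (0:ℝ) + ‖u‖ ^ 2 * (0:ℝ) ^ 2 : ℝ) ≠ 0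
        rw [hzero]
        positivity
      have hcomp := hqderiv.sqrt hne0
      have heq : (fun t : ℝ => Real.sqrt (‖v‖ ^ 2 + (2 * inner ℝ v u) * t + ‖u‖ ^ 2 * t ^ 2))
          = fun t => ‖ℓ t - y‖ := by
        funext t
        rw [← hq t, Real.sqrt_sq (norm_nonneg _)]
      rw [heq] at hcomp
      have hval : (2 * (inner ℝ v u : ℝ)) /
          (2 * Real.sqrt ((fun t : ℝ => ‖v‖ ^ 2 + (2 * inner ℝ v u) * t + ‖u‖ ^ 2 * t ^ 2) 0))
          = (inner ℝ v u : ℝ) / ‖v‖ := by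
        show (2 * (inner ℝ v u : ℝ)) /
          (2 * Real.sqrt (‖v‖ ^ 2 + (2 * inner ℝ v u) * (0:ℝ) + ‖u‖ ^ 2 * (0:ℝ) ^ 2)) = _
        rw [hzero, Real.sqrt_sq (norm_nonneg _), mul_div_mul_left _ _ (two_ne_zero)]
      rw [hval] at hcomp
      exact hcomp
    -- φ t = infDist (ℓ t) C - ‖ℓ t - y‖ has a max at 0
    have hφ : HasDerivAt (fun t => Metric.infDist (ℓ t) C - ‖ℓ t - y‖)
        (D u - (inner ℝ v u : ℝ) / ‖v‖) 0 := h1.sub h2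
    have hmax : IsLocalMax (fun t => Metric.infDist (ℓ t) C - ‖ℓ t - y‖) 0 := by
      apply Filter.Eventually.of_forall
      intro t
      have h1' : Metric.infDist (ℓ t) C ≤ ‖ℓ t - y‖ := by
        rw [← dist_eq_norm]; exact Metric.infDist_le_dist_of_mem hyC
      have h2' : Metric.infDist (ℓ 0) C - ‖ℓ 0 - y‖ = 0 := by
        simp only [hℓ, zero_smul, add_zero]
        rw [← hv, hvnorm]; ring
      simp only [h2']
      linarith
    have hzero := hmax.hasDerivAt_eq_zero hφ
    have : D u = (inner ℝ v u : ℝ) / ‖v‖ := by linarith [sub_eq_zero.mp hzero]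
    rw [this, hvnorm, real_inner_comm]
  refine ⟨fun u huU => key ystar hyC hybest u huU, ?_⟩
  intro z hzC hzbest
  rw [Submodule.mem_orthogonal]
  intro u huU
  have e1 := key ystar hyC hybest u huU
  have e2 := key z hzC hzbest u huU
  have : (inner ℝ u (x - ystar) : ℝ) = inner ℝ u (x - z) := by
    have := e1.symm.trans e2
    field_simp at this
    exact this
  have : (inner ℝ u (z - ystar) : ℝ) = 0 := by
    have h := this
    rw [inner_sub_right, inner_sub_right] at h
    rw [inner_sub_right]
    linarith
  exact this
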